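/- For every integer n ≥ 2, all i, j ∈ {1,…,n−1}, and all integers k, k' with 0 ≤ k < k' ≤ min{i−1, j−1, n−1−i, n−1−j}, one has b(i,j,k) < b(i,j,k') in the Bruhat order on S_n. -/

import Mathlib

set_option maxHeartbeats 1600000


namespace Paper

/-- The simple transposition `s_i = (i, i+1)` (1-based) in `S_n`, realized as a
permutation of `Fin n`. For `i` outside `{1, …, n-1}` we set `s i = 1`. -/
def s (n i : ℕ) : Equiv.Perm (Fin n) :=
  if h : 1 ≤ i ∧ i < n then Equiv.swap ⟨i - 1, by omega⟩ ⟨i, by omega⟩ else 1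

/-- The length of a permutation: its number of inversions. -/
def len {n : ℕ} (w : Equiv.Perm (Fin n)) : ℕ :=
  (Finset.univ.filter (fun p : Fin n × Fin n => p.1 < p.2 ∧ w p.2 < w p.1)).card

/-- `i` is a left descent of `w` if `1 ≤ i ≤ n-1` and `ℓ(s_i w) < ℓ(w)`. -/
def IsLeftDescent {n : ℕ} (w : Equiv.Perm (Fin n)) (i : ℕ) : Prop :=
  1 ≤ i ∧ i ≤ n - 1 ∧ len (s n i * w) < len w

/-- `i` is a right descent of `w` if `1 ≤ i ≤ n-1` and `ℓ(w s_i) < ℓ(w)`. -/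
def IsRightDescent {n : ℕ} (w : Equiv.Perm (Fin n)) (i : ℕ) : Prop :=
  1 ≤ i ∧ i ≤ n - 1 ∧ len (w * s n i) < len w

/-- A permutation is bigrassmannian if it has exactly one left descent and
exactly one right descent. -/
def Bigrassmannian {n : ℕ} (w : Equiv.Perm (Fin n)) : Prop :=
  (∃! i, IsLeftDescent w i) ∧ (∃! j, IsRightDescent w j)

/-- One step of the Bruhat order: `w ⋖ t * w` for a transposition `t`
with `ℓ(w) < ℓ(t w)`. -/
def BruhatStep {n : ℕ} (w w' : Equiv.Perm (Fin n)) : Prop :=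
  ∃ a b : Fin n, a ≠ b ∧ w' = Equiv.swap a b * w ∧ len w < len w'

/-- The Bruhat order on `S_n`: the partial order generated by `w < tw` whenever
`t` is a transposition and `ℓ(w) < ℓ(tw)`. -/
def BruhatLE {n : ℕ} : Equiv.Perm (Fin n) → Equiv.Perm (Fin n) → Prop :=
  Relation.ReflTransGen BruhatStep

/-- Strict Bruhat order. -/
def BruhatLT {n : ℕ} (x y : Equiv.Perm (Fin n)) : Prop :=
  BruhatLE x y ∧ x ≠ y

/-- The product `s_a s_{a+1} ⋯ s_b` of consecutive simple transpositions. -/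
def ascRun (n a b : ℕ) : Equiv.Perm (Fin n) :=
  ((List.range (b + 1 - a)).map (fun t => s n (a + t))).prod

/-- For `i ≤ j`: `b(i,j,k) = (s_i ⋯ s_{j+k})(s_{i-1} ⋯ s_{j+k-1}) ⋯ (s_{i-k} ⋯ s_j)`. -/
def bAux (n i j k : ℕ) : Equiv.Perm (Fin n) :=
  ((List.range (k + 1)).map (fun m => ascRun n (i - m) (j + k - m))).prod

/-- The bigrassmannian permutation `b(i,j,k)`; for `j < i` it is `b(j,i,k)⁻¹`. -/
def b (n i j k : ℕ) : Equiv.Perm (Fin n) :=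
  if i ≤ j then bAux n i j k else (bAux n j i k)⁻¹

/-- The value `w(i)` of a permutation `w ∈ S_n` at `i ∈ {1, …, n}`, 1-based. -/
def act {n : ℕ} (w : Equiv.Perm (Fin n)) (i : ℕ) : ℕ :=
  if h : 1 ≤ i ∧ i ≤ n then ((w ⟨i - 1, by omega⟩ : Fin n) : ℕ) + 1 else i

/-- The essential set of a permutation `w ∈ S_n`. -/
def Ess {n : ℕ} (w : Equiv.Perm (Fin n)) : Set (ℕ × ℕ) :=
  {p | 1 ≤ p.1 ∧ p.1 ≤ n - 1 ∧ 1 ≤ p.2 ∧ p.2 ≤ n - 1 ∧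
    p.1 < act w⁻¹ p.2 ∧ p.2 < act w p.1 ∧
    act w (p.1 + 1) ≤ p.2 ∧ act w⁻¹ (p.2 + 1) ≤ p.1}

/-- The rank function `r_w(i,j) = |{k ≤ i : w(k) ≤ j}|` (1-based). -/
def rnk {n : ℕ} (w : Equiv.Perm (Fin n)) (i j : ℕ) : ℕ :=
  ((Finset.Icc 1 i).filter (fun k => act w k ≤ j)).card

/-- The co-rank function `t_w(i,j) = min{i,j} - r_w(i,j)`. -/
def cork {n : ℕ} (w : Equiv.Perm (Fin n)) (i j : ℕ) : ℕ :=
  min i j - rnk w i j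

/-- The set of bigrassmannian permutations `y ≤ w` in Bruhat order. -/
def BSet {n : ℕ} (w : Equiv.Perm (Fin n)) : Set (Equiv.Perm (Fin n)) :=
  {y | Bigrassmannian y ∧ BruhatLE y w}

/-- The set of Bruhat-maximal elements of `BSet w`. -/
def BM {n : ℕ} (w : Equiv.Perm (Fin n)) : Set (Equiv.Perm (Fin n)) :=
  {y ∈ BSet w | ∀ z ∈ BSet w, BruhatLE y z → z = y}


def mkPerm (n : ℕ) (f g : ℕ → ℕ) (hf : ∀ x, x < n → f x < n) (hg : ∀ x, x < n → g x < n)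
    (hgf : ∀ x, x < n → g (f x) = x) (hfg : ∀ x, x < n → f (g x) = x) : Equiv.Perm (Fin n) where
  toFun p := ⟨f p, hf p p.2⟩
  invFun p := ⟨g p, hg p p.2⟩
  left_inv p := Fin.ext (hgf p p.2)
  right_inv p := Fin.ext (hfg p p.2)

@[simp] lemma mkPerm_apply_val (n f g hf hg hgf hfg) (p : Fin n) :
    ((mkPerm n f g hf hg hgf hfg) p : ℕ) = f p := rfl

@[simp] lemma mkPerm_inv_apply_val (n f g hf hg hgf hfg) (p : Fin n) :
    (((mkPerm n f g hf hg hgf hfg))⁻¹ p : ℕ) = g p := rfl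

def cycF (a b x : ℕ) : ℕ := if a ≤ x + 1 ∧ x + 1 ≤ b then x + 1 else if x = b then a - 1 else x

lemma ascRun_nil (n a b : ℕ) (h : b + 1 ≤ a) : ascRun n a b = 1 := by
  unfold ascRun
  have : b + 1 - a = 0 := by omega
  simp [this]

lemma ascRun_cons (n a b : ℕ) (h : a ≤ b) :
    ascRun n a b = s n a * ascRun n (a + 1) b := by
  unfold ascRun
  have h1 : b + 1 - a = (b + 1 - (a+1)) + 1 := by omega
  rw [h1, List.range_succ_eq_map]
  simp [List.map_map, Function.comp_def, Nat.add_assoc, Nat.add_comm 1]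

lemma s_apply_val (n i : ℕ) (h1 : 1 ≤ i) (h2 : i < n) (p : Fin n) :
    ((s n i p : Fin n) : ℕ) = if (p : ℕ) = i - 1 then i else if (p:ℕ) = i then i - 1 else p := by
  unfold s
  rw [dif_pos ⟨h1, h2⟩]
  rcases p with ⟨p, hp⟩
  simp only [Equiv.swap_apply_def, Fin.ext_iff]
  split_ifs <;> simp_all [Fin.ext_iff]

lemma ascRun_apply (n : ℕ) : ∀ d a, 1 ≤ a → a + d < n → ∀ p : Fin n,
    ((ascRun n a (a + d) p : Fin n) : ℕ) = cycF a (a + d) p := by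
  intro d
  induction d with
  | zero =>
    intro a h1 h2 p
    rw [show a + 0 = a from rfl, ascRun_cons n a a le_rfl, ascRun_nil n (a+1) a (by omega),
      mul_one, s_apply_val n a h1 h2]
    rcases p with ⟨p, hp⟩
    simp only [cycF]
    split_ifs <;> omega
  | succ d ih =>
    intro a h1 h2 p
    rw [show a + (d+1) = a + (d+1) from rfl, ascRun_cons n a (a + (d+1)) (by omega)]
    have e : a + (d + 1) = (a+1) + d := by omega
    rw [Equiv.Perm.mul_apply]
    rw [e] at h2 ⊢
    rw [s_apply_val n a h1 (by omega)]
    have := ih (a+1) (by omega) h2 p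
    rcases p with ⟨p, hp⟩
    rw [this]
    simp only [Fin.val_mk, cycF]
    split_ifs <;> omega

lemma bAux_zero (n i j : ℕ) : bAux n i j 0 = ascRun n i j := by
  unfold bAux
  simp [List.range_succ]

lemma bAux_succ (n i j k : ℕ) :
    bAux n i j (k + 1) = ascRun n i (j + k + 1) * bAux n (i - 1) j k := by
  unfold bAux
  rw [show k + 1 + 1 = (k+1) + 1 from rfl, List.range_succ_eq_map]
  simp only [List.map_cons, List.prod_cons, List.map_map, Function.comp_def]
  congr 1
  congr 1
  apply List.map_congr_left
  intro m hm
  congr 1 <;> omega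

/-- explicit form of `bAux` (0-based positions/values). -/
def bpF (i j k x : ℕ) : ℕ :=
  if i ≤ x + k + 1 ∧ x + 1 ≤ j then x + k + 1
  else if j + 1 ≤ x + 1 ∧ x + 1 ≤ j + k + 1 then x - (j + k + 1 - i) else x

def bpG (i j k y : ℕ) : ℕ :=
  if i + 1 ≤ y + 1 ∧ y + 1 ≤ j + k + 1 then y - (k + 1)
  else if i ≤ y + k + 1 ∧ y + 1 ≤ i then y + (j + k + 1 - i) else y

lemma bAux_apply (n : ℕ) (j : ℕ) : ∀ k i, 1 ≤ i → i ≤ j → k + 1 ≤ i → j + k + 1 ≤ n →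
    ∀ p : Fin n, ((bAux n i j k p : Fin n) : ℕ) = bpF i j k p := by
  intro k
  induction k with
  | zero =>
    intro i h1 h2 h3 h4 p
    rw [bAux_zero]
    have e : j = i + (j - i) := by omega
    rw [e, ascRun_apply n (j-i) i h1 (by omega)]
    rcases p with ⟨p, hp⟩
    simp only [cycF, bpF]
    split_ifs <;> omega
  | succ k ih =>
    intro i h1 h2 h3 h4 p
    rw [bAux_succ, Equiv.Perm.mul_apply]
    have e : j + k + 1 = i + (j + k + 1 - i) := by omega
    rw [e, ascRun_apply n (j+k+1-i) i h1 (by omega)]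
    rw [ih (i-1) (by omega) (by omega) (by omega) (by omega)]
    rcases p with ⟨p, hp⟩
    simp only [cycF, bpF]
    split_ifs <;> omega

lemma key_swap (n : ℕ) (a c : Fin n) (hac : (c : ℕ) = (a : ℕ) + 1) (x y : Fin n) (hxy : x ≠ y) :
    (Equiv.swap a c y < Equiv.swap a c x) ↔ ((y < x ∧ ¬(x = c ∧ y = a)) ∨ (x = a ∧ y = c)) := by
  simp only [Equiv.swap_apply_def]
  have hxy' : (x : ℕ) ≠ (y : ℕ) := fun hh => hxy (Fin.ext hh)
  split_ifs with h1 h2 h3 h4 h5 h6 h7 h8 <;>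
    simp only [Fin.lt_def, Fin.ext_iff, not_and] at * <;> omega

lemma len_swap_adj {n : ℕ} (w : Equiv.Perm (Fin n)) (a c : Fin n) (hac : (c : ℕ) = (a : ℕ) + 1)
    (h : w⁻¹ a < w⁻¹ c) : len (Equiv.swap a c * w) = len w + 1 := by
  have hac' : a < c := by rw [Fin.lt_def]; omega
  have hset : (Finset.univ.filter
        (fun p : Fin n × Fin n => p.1 < p.2 ∧ (Equiv.swap a c * w) p.2 < (Equiv.swap a c * w) p.1))
      = insert (w⁻¹ a, w⁻¹ c) (Finset.univ.filter
        (fun p : Fin n × Fin n => p.1 < p.2 ∧ w p.2 < w p.1)) := by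
    refine Finset.ext fun x => ?_
    obtain ⟨p, q⟩ := x
    rw [Finset.mem_insert, Finset.mem_filter, Finset.mem_filter]
    simp only [Finset.mem_filter, Finset.mem_insert, Finset.mem_univ, true_and,
      Equiv.Perm.mul_apply, Prod.mk.injEq]
    constructor
    · rintro ⟨hpq, hlt⟩
      have hwpq : w p ≠ w q := fun hh => (hpq.ne (w.injective hh))
      rw [key_swap n a c hac (w p) (w q) hwpq] at hlt
      rcases hlt with ⟨hyx, _⟩ | ⟨hxa, hyc⟩
      · right; exact ⟨hpq, hyx⟩
      · left
        constructor
        · rw [← hxa]; exact (w.symm_apply_apply p).symm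
        · rw [← hyc]; exact (w.symm_apply_apply q).symm
    · rintro (⟨hp, hq⟩ | ⟨hpq, hinv⟩)
      · subst hp; subst hq
        refine ⟨h, ?_⟩
        rw [show w (w⁻¹ a) = a from w.apply_symm_apply a, show w (w⁻¹ c) = c from w.apply_symm_apply c, Equiv.swap_apply_left, Equiv.swap_apply_right]
        exact hac'
      · refine ⟨hpq, ?_⟩
        have hwpq : w p ≠ w q := fun hh => (hpq.ne (w.injective hh))
        rw [key_swap n a c hac (w p) (w q) hwpq]
        left
        refine ⟨hinv, ?_⟩
        rintro ⟨hc, ha⟩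
        have hp : p = w⁻¹ c := by rw [← hc]; exact (w.symm_apply_apply p).symm
        have hq : q = w⁻¹ a := by rw [← ha]; exact (w.symm_apply_apply q).symm
        rw [hp, hq] at hpq
        exact absurd h (lt_asymm hpq)
  have hnotmem : (w⁻¹ a, w⁻¹ c) ∉ (Finset.univ.filter
      (fun p : Fin n × Fin n => p.1 < p.2 ∧ w p.2 < w p.1)) := by
    simp only [Finset.mem_filter, Finset.mem_univ, true_and, not_and]
    intro _
    rw [show w (w⁻¹ a) = a from w.apply_symm_apply a, show w (w⁻¹ c) = c from w.apply_symm_apply c]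
    exact fun hh => absurd hac' (lt_asymm hh)
  rw [len, hset, Finset.card_insert_of_notMem hnotmem, len]

lemma step_adj {n : ℕ} (w : Equiv.Perm (Fin n)) (a c : Fin n) (hac : (c : ℕ) = (a : ℕ) + 1)
    (h : w⁻¹ a < w⁻¹ c) : BruhatStep w (Equiv.swap a c * w) :=
  ⟨a, c, fun hh => by rw [hh] at hac; omega, rfl, by rw [len_swap_adj w a c hac h]; omega⟩

lemma len_lt_of_transGen {n : ℕ} {x y : Equiv.Perm (Fin n)}
    (h : Relation.TransGen BruhatStep x y) : len x < len y := by
  induction h with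
  | single h => obtain ⟨a, b, _, _, hl⟩ := h; exact hl
  | tail _ h ih => obtain ⟨a, b, _, _, hl⟩ := h; omega

lemma len_inv {n : ℕ} (w : Equiv.Perm (Fin n)) : len w⁻¹ = len w := by
  unfold len
  apply Finset.card_bij' (fun p _ => (w⁻¹ p.2, w⁻¹ p.1)) (fun p _ => (w p.2, w p.1))
  · rintro ⟨x, y⟩ hm
    simp only [Finset.mem_filter, Finset.mem_univ, true_and] at hm ⊢
    exact ⟨hm.2, by simpa using hm.1⟩
  · rintro ⟨p, q⟩ hm
    simp only [Finset.mem_filter, Finset.mem_univ, true_and] at hm ⊢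
    exact ⟨hm.2, by simpa using hm.1⟩
  · rintro ⟨x, y⟩ _; simp
  · rintro ⟨p, q⟩ _; simp

lemma swap_mul_inv {n : ℕ} (w : Equiv.Perm (Fin n)) (a b : Fin n) :
    (Equiv.swap a b * w)⁻¹ = Equiv.swap (w⁻¹ a) (w⁻¹ b) * w⁻¹ := by
  ext x
  simp [Equiv.swap_apply_def, Equiv.Perm.mul_apply]
  split_ifs <;> simp_all

lemma step_inv {n : ℕ} {w w' : Equiv.Perm (Fin n)} (h : BruhatStep w w') :
    BruhatStep w⁻¹ w'⁻¹ := by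
  obtain ⟨a, b, hab, rfl, hl⟩ := h
  refine ⟨w⁻¹ a, w⁻¹ b, fun hh => hab (w.symm.injective hh), swap_mul_inv w a b, ?_⟩
  rw [len_inv, len_inv]
  exact hl

lemma transGen_inv {n : ℕ} {x y : Equiv.Perm (Fin n)}
    (h : Relation.TransGen BruhatStep x y) :
    Relation.TransGen BruhatStep x⁻¹ y⁻¹ :=
  Relation.TransGen.lift Inv.inv (fun _ _ hs => step_inv hs) _ _ h

lemma bruhatLT_of_transGen {n : ℕ} {x y : Equiv.Perm (Fin n)}
    (h : Relation.TransGen BruhatStep x y) : BruhatLT x y :=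
  ⟨h.to_reflTransGen, fun hh => by subst hh; exact absurd (len_lt_of_transGen h) (lt_irrefl _)⟩

lemma swap_apply_val {n : ℕ} (a c x : Fin n) :
    ((Equiv.swap a c) x : ℕ) =
      if (x : ℕ) = (a : ℕ) then (c : ℕ) else if (x : ℕ) = (c : ℕ) then (a : ℕ) else (x : ℕ) := by
  rw [Equiv.swap_apply_def]
  by_cases h1 : x = a
  · subst h1; simp
  · have h1' : (x : ℕ) ≠ (a : ℕ) := fun hh => h1 (Fin.ext hh)
    by_cases h2 : x = c
    · subst h2; simp [h1, h1']
    · have h2' : (x : ℕ) ≠ (c : ℕ) := fun hh => h2 (Fin.ext hh)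
      simp [h1, h2, h1', h2']

/-- guard for phase-A intermediates -/
def gA (n i j k t : ℕ) : Prop :=
  1 ≤ i ∧ i ≤ j ∧ k + 2 ≤ i ∧ j + k + 2 ≤ n ∧ t ≤ k + 1

instance (n i j k t : ℕ) : Decidable (gA n i j k t) := by unfold gA; infer_instance

def wAF (n i j k t x : ℕ) : ℕ :=
  if gA n i j k t then
    if x + k + 2 = i then i - k - 2 + t
    else if i ≤ x + k + 1 ∧ x + 1 ≤ j then x + k + 1
    else if j + 1 ≤ x + 1 ∧ x + 1 ≤ j + t then x - (j + k + 2 - i)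
    else if j + t + 1 ≤ x + 1 ∧ x + 1 ≤ j + k + 1 then x - (j + k + 1 - i)
    else x
  else x

def wAG (n i j k t y : ℕ) : ℕ :=
  if gA n i j k t then
    if y + k + 2 = i + t then i - k - 2
    else if i ≤ y ∧ y + 1 ≤ j + k + 1 then y - (k + 1)
    else if i ≤ y + k + 2 ∧ y + k + 3 ≤ i + t then y + (j + k + 2 - i)
    else if i + t ≤ y + k + 1 ∧ y + 1 ≤ i then y + (j + k + 1 - i)
    else y
  else y

def wA (n i j k t : ℕ) : Equiv.Perm (Fin n) :=
  mkPerm n (wAF n i j k t) (wAG n i j k t)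
    (by intro x hx
        by_cases hg : gA n i j k t
        · have hg' := hg; unfold gA at hg'
          unfold wAF; rw [if_pos hg]
          split_ifs <;> omega
        · unfold wAF; rw [if_neg hg]; exact hx)
    (by intro x hx
        by_cases hg : gA n i j k t
        · have hg' := hg; unfold gA at hg'
          unfold wAG; rw [if_pos hg]
          split_ifs <;> omega
        · unfold wAG; rw [if_neg hg]; exact hx)
    (by intro x hx
        by_cases hg : gA n i j k t
        · have hg' := hg; unfold gA at hg'
          set y := wAF n i j k t x with hy
          unfold wAF at hy; rw [if_pos hg] at hy
          unfold wAG; rw [if_pos hg]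
          split_ifs at hy ⊢ <;> omega
        · unfold wAF wAG; rw [if_neg hg, if_neg hg])
    (by intro x hx
        by_cases hg : gA n i j k t
        · have hg' := hg; unfold gA at hg'
          set y := wAG n i j k t x with hy
          unfold wAG at hy; rw [if_pos hg] at hy
          unfold wAF; rw [if_pos hg]
          split_ifs at hy ⊢ <;> omega
        · unfold wAF wAG; rw [if_neg hg, if_neg hg])

/-- guard for phase-B intermediates -/
def gB (n i j k t : ℕ) : Prop :=
  1 ≤ i ∧ i ≤ j ∧ k + 2 ≤ i ∧ j + k + 2 ≤ n ∧ i + t ≤ j + k + 1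

instance (n i j k t : ℕ) : Decidable (gB n i j k t) := by unfold gB; infer_instance

def wBF (n i j k t x : ℕ) : ℕ :=
  if gB n i j k t then
    if x + k + 2 = i then i - 1
    else if i ≤ x + k + 1 ∧ x + t + 1 ≤ j then x + k + 1
    else if j ≤ x + t ∧ x + 1 ≤ j then x + k + 2
    else if j ≤ x ∧ x ≤ j + k then x - (j + k + 2 - i)
    else if x = j + k + 1 then j + k + 1 - t
    else x
  else x

def wBG (n i j k t y : ℕ) : ℕ :=
  if gB n i j k t then
    if y + 1 = i then i - k - 2
    else if i ≤ y + 1 ∧ y + t ≤ j + k then y - (k + 1)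
    else if y + t = j + k + 1 then j + k + 1
    else if j + k + 2 ≤ y + t ∧ y ≤ j + k + 1 then y - (k + 2)
    else if i ≤ y + k + 2 ∧ y + 2 ≤ i then y + (j + k + 2 - i)
    else y
  else y

def wB (n i j k t : ℕ) : Equiv.Perm (Fin n) :=
  mkPerm n (wBF n i j k t) (wBG n i j k t)
    (by intro x hx
        by_cases hg : gB n i j k t
        · have hg' := hg; unfold gB at hg'
          unfold wBF; rw [if_pos hg]
          split_ifs <;> omega
        · unfold wBF; rw [if_neg hg]; exact hx)
    (by intro x hx
        by_cases hg : gB n i j k t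
        · have hg' := hg; unfold gB at hg'
          unfold wBG; rw [if_pos hg]
          split_ifs <;> omega
        · unfold wBG; rw [if_neg hg]; exact hx)
    (by intro x hx
        by_cases hg : gB n i j k t
        · have hg' := hg; unfold gB at hg'
          set y := wBF n i j k t x with hy
          unfold wBF at hy; rw [if_pos hg] at hy
          unfold wBG; rw [if_pos hg]
          split_ifs at hy ⊢ <;> omega
        · unfold wBF wBG; rw [if_neg hg, if_neg hg])
    (by intro x hx
        by_cases hg : gB n i j k t
        · have hg' := hg; unfold gB at hg'
          set y := wBG n i j k t x with hy
          unfold wBG at hy; rw [if_pos hg] at hy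
          unfold wBF; rw [if_pos hg]
          split_ifs at hy ⊢ <;> omega
        · unfold wBF wBG; rw [if_neg hg, if_neg hg])

section
variable (n i j k : ℕ)

lemma wA_zero (h1 : 1 ≤ i) (h2 : i ≤ j) (h3 : k + 2 ≤ i) (h4 : j + k + 2 ≤ n) :
    bAux n i j k = wA n i j k 0 := by
  have hg : gA n i j k 0 := ⟨h1, h2, h3, h4, by omega⟩
  apply Equiv.ext; intro p
  apply Fin.ext
  rw [bAux_apply n j k i h1 h2 (by omega) (by omega) p]
  simp only [wA, mkPerm_apply_val]
  unfold wAF bpF; rw [if_pos hg]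
  split_ifs <;> omega

lemma stepA (t : ℕ) (ht : t ≤ k)
    (h1 : 1 ≤ i) (h2 : i ≤ j) (h3 : k + 2 ≤ i) (h4 : j + k + 2 ≤ n) :
    BruhatStep (wA n i j k t) (wA n i j k (t + 1)) := by
  have hgt : gA n i j k t := ⟨h1, h2, h3, h4, by omega⟩
  have hgt1 : gA n i j k (t + 1) := ⟨h1, h2, h3, h4, by omega⟩
  have ha : i - k - 2 + t < n := by omega
  have hc : i - k - 1 + t < n := by omega
  have hpos : (wA n i j k t)⁻¹ ⟨i - k - 2 + t, ha⟩ < (wA n i j k t)⁻¹ ⟨i - k - 1 + t, hc⟩ := by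
    rw [Fin.lt_def]
    simp only [wA, mkPerm_inv_apply_val]
    unfold wAG; rw [if_pos hgt, if_pos hgt]
    obtain ⟨c1, c2, c3, c4, c5⟩ := hgt
    split_ifs <;> omega
  have hac : ((⟨i - k - 1 + t, hc⟩ : Fin n) : ℕ) = ((⟨i - k - 2 + t, ha⟩ : Fin n) : ℕ) + 1 := by
    show i - k - 1 + t = i - k - 2 + t + 1; omega
  have heq : Equiv.swap ⟨i - k - 2 + t, ha⟩ ⟨i - k - 1 + t, hc⟩ * wA n i j k t
      = wA n i j k (t + 1) := by
    apply Equiv.ext; intro p; apply Fin.ext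
    rw [Equiv.Perm.mul_apply, swap_apply_val]
    simp only [wA, mkPerm_apply_val]
    unfold wAF; simp only [if_pos hgt, if_pos hgt1]
    obtain ⟨c1, c2, c3, c4, c5⟩ := hgt
    split_ifs <;> omega
  have hstep := step_adj (wA n i j k t) _ _ hac hpos
  rwa [heq] at hstep

lemma wA_to_wB (h1 : 1 ≤ i) (h2 : i ≤ j) (h3 : k + 2 ≤ i) (h4 : j + k + 2 ≤ n) :
    wA n i j k (k + 1) = wB n i j k 0 := by
  have hgA : gA n i j k (k + 1) := ⟨h1, h2, h3, h4, by omega⟩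
  have hgB : gB n i j k 0 := ⟨h1, h2, h3, h4, by omega⟩
  apply Equiv.ext; intro p; apply Fin.ext
  simp only [wA, wB, mkPerm_apply_val]
  unfold wAF wBF; rw [if_pos hgA, if_pos hgB]
  obtain ⟨c1, c2, c3, c4, c5⟩ := hgA
  split_ifs <;> omega

lemma stepB (t : ℕ) (ht : i + t ≤ j + k)
    (h1 : 1 ≤ i) (h2 : i ≤ j) (h3 : k + 2 ≤ i) (h4 : j + k + 2 ≤ n) :
    BruhatStep (wB n i j k t) (wB n i j k (t + 1)) := by
  have hgt : gB n i j k t := ⟨h1, h2, h3, h4, by omega⟩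
  have hgt1 : gB n i j k (t + 1) := ⟨h1, h2, h3, h4, by omega⟩
  have ha : j + k - t < n := by omega
  have hc : j + k + 1 - t < n := by omega
  have hpos : (wB n i j k t)⁻¹ ⟨j + k - t, ha⟩ < (wB n i j k t)⁻¹ ⟨j + k + 1 - t, hc⟩ := by
    rw [Fin.lt_def]
    simp only [wB, mkPerm_inv_apply_val]
    unfold wBG; rw [if_pos hgt, if_pos hgt]
    obtain ⟨c1, c2, c3, c4, c5⟩ := hgt
    split_ifs <;> omega
  have hac : ((⟨j + k + 1 - t, hc⟩ : Fin n) : ℕ) = ((⟨j + k - t, ha⟩ : Fin n) : ℕ) + 1 := by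
    show j + k + 1 - t = j + k - t + 1; omega
  have heq : Equiv.swap ⟨j + k - t, ha⟩ ⟨j + k + 1 - t, hc⟩ * wB n i j k t
      = wB n i j k (t + 1) := by
    apply Equiv.ext; intro p; apply Fin.ext
    rw [Equiv.Perm.mul_apply, swap_apply_val]
    simp only [wB, mkPerm_apply_val]
    unfold wBF; simp only [if_pos hgt, if_pos hgt1]
    obtain ⟨c1, c2, c3, c4, c5⟩ := hgt
    split_ifs <;> omega
  have hstep := step_adj (wB n i j k t) _ _ hac hpos
  rwa [heq] at hstep

lemma stepLast (h1 : 1 ≤ i) (h2 : i ≤ j) (h3 : k + 2 ≤ i) (h4 : j + k + 2 ≤ n) :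
    BruhatStep (wB n i j k (j + k + 1 - i)) (bAux n i j (k + 1)) := by
  set T := j + k + 1 - i with hT
  have hgt : gB n i j k T := ⟨h1, h2, h3, h4, by omega⟩
  have ha : i - 1 < n := by omega
  have hc : i < n := by omega
  have hpos : (wB n i j k T)⁻¹ ⟨i - 1, ha⟩ < (wB n i j k T)⁻¹ ⟨i, hc⟩ := by
    rw [Fin.lt_def]
    simp only [wB, mkPerm_inv_apply_val]
    unfold wBG; rw [if_pos hgt, if_pos hgt]
    obtain ⟨c1, c2, c3, c4, c5⟩ := hgt
    split_ifs <;> omega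
  have hac : ((⟨i, hc⟩ : Fin n) : ℕ) = ((⟨i - 1, ha⟩ : Fin n) : ℕ) + 1 := by
    show i = i - 1 + 1; omega
  have heq : Equiv.swap ⟨i - 1, ha⟩ ⟨i, hc⟩ * wB n i j k T = bAux n i j (k + 1) := by
    apply Equiv.ext; intro p; apply Fin.ext
    rw [Equiv.Perm.mul_apply, swap_apply_val]
    simp only [wB, mkPerm_apply_val]
    rw [bAux_apply n j (k+1) i h1 h2 (by omega) (by omega) p]
    unfold wBF bpF; simp only [if_pos hgt]
    obtain ⟨c1, c2, c3, c4, c5⟩ := hgt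
    split_ifs <;> omega
  have hstep := step_adj (wB n i j k T) _ _ hac hpos
  rwa [heq] at hstep

lemma chain_one (h1 : 1 ≤ i) (h2 : i ≤ j) (h3 : k + 2 ≤ i) (h4 : j + k + 2 ≤ n) :
    Relation.TransGen BruhatStep (bAux n i j k) (bAux n i j (k + 1)) := by
  have hA : ∀ t, t ≤ k + 1 →
      Relation.ReflTransGen BruhatStep (bAux n i j k) (wA n i j k t) := by
    intro t
    induction t with
    | zero => intro _; rw [wA_zero n i j k h1 h2 h3 h4]
    | succ t ih =>
      intro ht
      exact (ih (by omega)).tail (stepA n i j k t (by omega) h1 h2 h3 h4)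
  have hB : ∀ t, i + t ≤ j + k + 1 →
      Relation.ReflTransGen BruhatStep (bAux n i j k) (wB n i j k t) := by
    intro t
    induction t with
    | zero =>
      intro _
      rw [← wA_to_wB n i j k h1 h2 h3 h4]
      exact hA (k + 1) le_rfl
    | succ t ih =>
      intro ht
      exact (ih (by omega)).tail (stepB n i j k t (by omega) h1 h2 h3 h4)
  exact Relation.TransGen.tail' (hB (j + k + 1 - i) (by omega))
    (stepLast n i j k h1 h2 h3 h4)

lemma chain_many (h1 : 1 ≤ i) (h2 : i ≤ j) :
    ∀ d, k + 2 + d ≤ i → j + k + 2 + d ≤ n →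
      Relation.TransGen BruhatStep (bAux n i j k) (bAux n i j (k + 1 + d)) := by
  intro d
  induction d with
  | zero => intro hi hn; exact chain_one n i j k h1 h2 (by omega) (by omega)
  | succ d ih =>
    intro hi hn
    have e : k + 1 + (d + 1) = (k + 1 + d) + 1 := by omega
    rw [e]
    exact (ih (by omega) (by omega)).trans
      (chain_one n i j (k + 1 + d) h1 h2 (by omega) (by omega))

end

theorem stmt6 (n : ℕ) (hn : 2 ≤ n) (i j k k' : ℕ)
    (hi1 : 1 ≤ i) (hi2 : i ≤ n - 1) (hj1 : 1 ≤ j) (hj2 : j ≤ n - 1)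
    (hkk : k < k')
    (hk' : k' ≤ min (min (i - 1) (j - 1)) (min (n - 1 - i) (n - 1 - j))) :
    BruhatLT (b n i j k) (b n i j k') := by
  have e : k + 1 + (k' - (k + 1)) = k' := by omega
  rcases le_or_gt i j with hij | hij
  · have h := chain_many n i j k hi1 hij (k' - (k + 1)) (by omega) (by omega)
    rw [e] at h
    simp only [b, if_pos hij]
    exact bruhatLT_of_transGen h
  · have h := chain_many n j i k hj1 (le_of_lt hij) (k' - (k + 1)) (by omega) (by omega)
    rw [e] at h
    simp only [b, if_neg (not_le.mpr hij)]
    exact bruhatLT_of_transGen (transGen_inv h)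


end Paper
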